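/- Thompson's quandle P is isomorphic to the quandle Q presented by two generators a, b and the two relations a ▷ (a ▷ b) = b ▷ (a ▷ b) and a ▷ (a ▷ (a ▷ b)) = b ▷ (a ▷ (a ▷ b)). In particular, P is finitely presented. -/

import Mathlib

open Quandles

universe u v w

/-- `(P, p)` is a model of the quandle presented by generators `p 0, p 1, p 2, …` and
relations `p j ◃ p k = p (k+1)` for all `j < k` (Thompson's quandle): the relations hold
and the universal property of the presentation is satisfied. -/
structure IsThompsonQuandle (P : Type v) [Quandle P] (p : ℕ → P) : Prop where
  rel : ∀ ⦃j k : ℕ⦄, j < k → p j ◃ p k = p (k + 1)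
  lift : ∀ (Q : Type u) [Quandle Q] (q : ℕ → Q),
    (∀ ⦃j k : ℕ⦄, j < k → q j ◃ q k = q (k + 1)) →
    ∃! f : P →◃ Q, ∀ n, f (p n) = q n

/-- `(Q, a, b)` is a model of the quandle presented by two generators `a, b` and the two
relations `a ◃ (a ◃ b) = b ◃ (a ◃ b)` and `a ◃ (a ◃ (a ◃ b)) = b ◃ (a ◃ (a ◃ b))`. -/
structure IsFinThompsonQuandle (Q : Type w) [Quandle Q] (a b : Q) : Prop where
  rel1 : a ◃ (a ◃ b) = b ◃ (a ◃ b)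
  rel2 : a ◃ (a ◃ (a ◃ b)) = b ◃ (a ◃ (a ◃ b))
  lift : ∀ (R : Type u) [Quandle R] (x y : R),
    x ◃ (x ◃ y) = y ◃ (x ◃ y) → x ◃ (x ◃ (x ◃ y)) = y ◃ (x ◃ (x ◃ y)) →
    ∃! f : Q →◃ R, f a = x ∧ f b = y


/-- Auxiliary sequence: `x, y, x ◃ y, x ◃ (x ◃ y), …`. -/
def thompsonSeq {R : Type*} [Quandle R] (x y : R) : ℕ → R
  | 0 => x
  | 1 => y
  | (n+2) => x ◃ thompsonSeq x y (n+1)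

lemma thompsonSeq_key {R : Type*} [Quandle R] (x y : R)
    (h1 : x ◃ (x ◃ y) = y ◃ (x ◃ y))
    (h2 : x ◃ (x ◃ (x ◃ y)) = y ◃ (x ◃ (x ◃ y))) :
    ∀ k j, j < k → thompsonSeq x y j ◃ thompsonSeq x y k = thompsonSeq x y (k + 1) := by
  set q := thompsonSeq x y with hq
  intro k
  induction k using Nat.strong_induction_on with
  | _ k IH =>
    match k with
    | 0 => intro j hj; omega
    | 1 =>
      intro j hj
      interval_cases j
      rfl
    | 2 =>
      intro j hj
      interval_cases j
      · rfl
      · exact h1.symm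
    | 3 =>
      intro j hj
      have e1 : q 1 ◃ q 2 = q 3 := h1.symm
      have e2 : q 0 ◃ q 1 = q 2 := rfl
      have e3 : q 0 ◃ q 2 = q 3 := rfl
      interval_cases j
      · rfl
      · exact h2.symm
      · -- q 2 ◃ q 3 = q 4
        have := Shelf.self_distrib (x := q 0) (y := q 1) (z := q 2)
        rw [e1, e2, e3] at this
        exact this.symm
    | (k+4) =>
      have ident : ∀ i j : ℕ, i < j → j < k + 3 →
          q i ◃ q (k+4) = q (j+1) ◃ q (k+4) := by
        intro i j hij hjk
        have ha : q j ◃ q (k+3) = q (k+4) := IH (k+3) (by omega) j (by omega)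
        have hb : q i ◃ q j = q (j+1) := IH j (by omega) i hij
        have hc : q i ◃ q (k+3) = q (k+4) := IH (k+3) (by omega) i (by omega)
        calc q i ◃ q (k+4) = q i ◃ (q j ◃ q (k+3)) := by rw [ha]
          _ = (q i ◃ q j) ◃ (q i ◃ q (k+3)) := Shelf.self_distrib
          _ = q (j+1) ◃ q (k+4) := by rw [hb, hc]
      have h0 : q 0 ◃ q (k+4) = q (k+5) := rfl
      intro j hj
      match j, hj with
      | 0, _ => exact h0
      | 1, _ =>
        have e13 : q 1 ◃ q (k+4) = q 3 ◃ q (k+4) := ident 1 2 (by omega) (by omega)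
        have e03 : q 0 ◃ q (k+4) = q 3 ◃ q (k+4) := ident 0 2 (by omega) (by omega)
        rw [e13, ← e03]; exact h0
      | (j+2), hj =>
        have e0 : q 0 ◃ q (k+4) = q (j+2) ◃ q (k+4) :=
          ident 0 (j+1) (by omega) (by omega)
        rw [← e0]; exact h0

/-- Thompson's quandle `P` is isomorphic to the quandle `Q` presented by two generators
`a, b` and the two relations `a ◃ (a ◃ b) = b ◃ (a ◃ b)` and
`a ◃ (a ◃ (a ◃ b)) = b ◃ (a ◃ (a ◃ b))`; in particular, `P` is finitely presented. -/
theorem thompson_finitely_presented {P : Type v} [Quandle P] {p : ℕ → P}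
    (hP : IsThompsonQuandle.{v, v} P p)
    {Q : Type v} [Quandle Q] {a b : Q} (hQ : IsFinThompsonQuandle.{v, v} Q a b) :
    ∃ e : P ≃ Q, (∀ x y : P, e (x ◃ y) = e x ◃ e y) ∧ e (p 0) = a ∧ e (p 1) = b := by
  -- the sequence a, b, a◃b, a◃(a◃b), … in Q satisfies the Thompson relations
  set q : ℕ → Q := thompsonSeq a b with hqdef
  have hqrel : ∀ ⦃j k : ℕ⦄, j < k → q j ◃ q k = q (k + 1) := fun j k h =>
    thompsonSeq_key a b hQ.rel1 hQ.rel2 k j h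
  obtain ⟨f, hf, hfuniq⟩ := hP.lift Q q hqrel
  -- relations needed for hQ.lift into P
  have r01 : p 0 ◃ p 1 = p 2 := hP.rel (by omega)
  have r02 : p 0 ◃ p 2 = p 3 := hP.rel (by omega)
  have r12 : p 1 ◃ p 2 = p 3 := hP.rel (by omega)
  have r03 : p 0 ◃ p 3 = p 4 := hP.rel (by omega)
  have r13 : p 1 ◃ p 3 = p 4 := hP.rel (by omega)
  obtain ⟨g, ⟨hga, hgb⟩, hguniq⟩ := hQ.lift P (p 0) (p 1)
    (by rw [r01, r02, r12]) (by rw [r01, r02, r03, r13])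
  -- g sends q n to p n
  have hg : ∀ n, g (q n) = p n := by
    intro n
    induction n using Nat.strong_induction_on with
    | _ n IH =>
      match n with
      | 0 => exact hga
      | 1 => exact hgb
      | (n+2) =>
        have : q (n+2) = a ◃ q (n+1) := rfl
        rw [this, g.map_act, hga, IH (n+1) (by omega)]
        exact hP.rel (by omega)
  -- f ∘ g = id on Q
  have hfg : ∀ z : Q, f (g z) = z := by
    obtain ⟨i, _, hiuniq⟩ := hQ.lift Q a b hQ.rel1 hQ.rel2
    have h1 : f.comp g = i := hiuniq (f.comp g)
      ⟨by rw [ShelfHom.comp_apply, hga]; exact (hf 0).trans rfl,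
       by rw [ShelfHom.comp_apply, hgb]; exact (hf 1).trans rfl⟩
    have h2 : ShelfHom.id Q = i := hiuniq (ShelfHom.id Q) ⟨rfl, rfl⟩
    intro z
    have := congrArg (fun h : Q →◃ Q => h z) (h1.trans h2.symm)
    exact this
  -- g ∘ f = id on P
  have hgf : ∀ z : P, g (f z) = z := by
    obtain ⟨i, _, hiuniq⟩ := hP.lift P p hP.rel
    have h1 : g.comp f = i := hiuniq (g.comp f)
      (fun n => by rw [ShelfHom.comp_apply, hf n, hg n])
    have h2 : ShelfHom.id P = i := hiuniq (ShelfHom.id P) (fun n => rfl)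
    intro z
    have := congrArg (fun h : P →◃ P => h z) (h1.trans h2.symm)
    exact this
  exact ⟨⟨f, g, hgf, hfg⟩, fun x y => f.map_act, hf 0, hf 1⟩
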